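/- Let p, p̃ be tropical polynomials in d variables with extended Newton polytopes P = ENewt(p) and P̃ = ENewt(p̃). Then (1/ρ)·max_{x ∈ B} |p(x) − p̃(x)| ≤ H(P, P̃), where B = {x ∈ ℝ^d : ‖x‖ ≤ r} and ρ = √(r² + 1), and H denotes the Hausdorff distance with respect to the Euclidean norm on ℝ^{d+1}. -/

import Mathlib

open Metric Set

lemma trop_aux {d n m : ℕ} (x : EuclideanSpace ℝ (Fin d)) (ρ : ℝ)
    (hρ : Real.sqrt (‖x‖ ^ 2 + 1) ≤ ρ)
    (a : Fin (n + 1) → EuclideanSpace ℝ (Fin d)) (b : Fin (n + 1) → ℝ)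
    (c : Fin (m + 1) → EuclideanSpace ℝ (Fin d)) (e : Fin (m + 1) → ℝ) :
    Finset.univ.sup' Finset.univ_nonempty (fun i => (inner ℝ (a i) x : ℝ) + b i) -
        Finset.univ.sup' Finset.univ_nonempty (fun j => (inner ℝ (c j) x : ℝ) + e j) ≤
      ρ * Metric.hausdorffDist
        (convexHull ℝ (Set.range fun i => (WithLp.equiv 2 (EuclideanSpace ℝ (Fin d) × ℝ)).symm (a i, b i)))
        (convexHull ℝ (Set.range fun j => (WithLp.equiv 2 (EuclideanSpace ℝ (Fin d) × ℝ)).symm (c j, e j))) := by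
  set P := convexHull ℝ (Set.range fun i => (WithLp.equiv 2 (EuclideanSpace ℝ (Fin d) × ℝ)).symm (a i, b i)) with hP
  set Pt := convexHull ℝ (Set.range fun j => (WithLp.equiv 2 (EuclideanSpace ℝ (Fin d) × ℝ)).symm (c j, e j)) with hPt
  set w : WithLp 2 (EuclideanSpace ℝ (Fin d) × ℝ) := (WithLp.equiv 2 _).symm (x, 1) with hw
  have hwn : ‖w‖ = Real.sqrt (‖x‖ ^ 2 + 1) := by
    rw [WithLp.prod_norm_eq_of_L2]
    simp [hw]
  have hρ0 : 0 ≤ ρ := le_trans (Real.sqrt_nonneg _) hρ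
  have hwρ : ‖w‖ ≤ ρ := hwn ▸ hρ
  -- finiteness of Hausdorff edist
  have hPb : Bornology.IsBounded P := by
    rw [hP, isBounded_convexHull]
    exact (Set.finite_range _).isBounded
  have hPtb : Bornology.IsBounded Pt := by
    rw [hPt, isBounded_convexHull]
    exact (Set.finite_range _).isBounded
  have hPne : P.Nonempty := ⟨_, subset_convexHull ℝ _ ⟨0, rfl⟩⟩
  have hPtne : Pt.Nonempty := ⟨_, subset_convexHull ℝ _ ⟨0, rfl⟩⟩
  have hfin : EMetric.hausdorffEdist P Pt ≠ ⊤ :=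
    hausdorffEdist_ne_top_of_nonempty_of_bounded hPne hPtne hPb hPtb
  -- the maximizing index
  obtain ⟨i0, -, hi0⟩ := Finset.exists_mem_eq_sup' (Finset.univ_nonempty)
    (fun i => (inner ℝ (a i) x : ℝ) + b i)
  rw [hi0]
  set u : WithLp 2 (EuclideanSpace ℝ (Fin d) × ℝ) := (WithLp.equiv 2 _).symm (a i0, b i0) with hu
  have huP : u ∈ P := subset_convexHull ℝ _ ⟨i0, rfl⟩
  have hφu : (inner ℝ w u : ℝ) = (inner ℝ (a i0) x : ℝ) + b i0 := by
    rw [WithLp.prod_inner_apply]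
    simp [hu, hw, real_inner_comm, mul_comm]
  -- bound on Pt: inner w v ≤ sup g
  have hub : ∀ v ∈ Pt, (inner ℝ w v : ℝ) ≤
      Finset.univ.sup' Finset.univ_nonempty (fun j => (inner ℝ (c j) x : ℝ) + e j) := by
    intro v hv
    have hconv : Convex ℝ {z : WithLp 2 (EuclideanSpace ℝ (Fin d) × ℝ) |
        (inner ℝ w z : ℝ) ≤ Finset.univ.sup' Finset.univ_nonempty (fun j => (inner ℝ (c j) x : ℝ) + e j)} :=
      convex_halfSpace_le (innerSL ℝ w).toLinearMap.isLinear _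
    have hsub : Pt ⊆ {z : WithLp 2 (EuclideanSpace ℝ (Fin d) × ℝ) |
        (inner ℝ w z : ℝ) ≤ Finset.univ.sup' Finset.univ_nonempty (fun j => (inner ℝ (c j) x : ℝ) + e j)} := by
      rw [hPt]
      refine convexHull_min ?_ hconv
      rintro _ ⟨j, rfl⟩
      have : (inner ℝ w ((WithLp.equiv 2 (EuclideanSpace ℝ (Fin d) × ℝ)).symm (c j, e j)) : ℝ)
          = (inner ℝ (c j) x : ℝ) + e j := by
        rw [WithLp.prod_inner_apply]; simp [hw, real_inner_comm, mul_comm]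
      simp only [Set.mem_setOf_eq, this]
      exact Finset.le_sup' (fun j => (inner ℝ (c j) x : ℝ) + e j) (Finset.mem_univ j)
    exact hsub hv
  -- main estimate
  refine le_of_forall_pos_le_add (fun ε hε => ?_)
  have hρpos : 0 < ρ := lt_of_lt_of_le (Real.sqrt_pos.mpr (by positivity)) hρ
  obtain ⟨v, hvPt, hdv⟩ := exists_dist_lt_of_hausdorffDist_lt huP
    (lt_add_of_pos_right _ (div_pos hε hρpos)) hfin
  have h1 : (inner ℝ (a i0) x : ℝ) + b i0 -
      Finset.univ.sup' Finset.univ_nonempty (fun j => (inner ℝ (c j) x : ℝ) + e j) ≤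
      (inner ℝ w u : ℝ) - (inner ℝ w v : ℝ) := by
    rw [hφu]
    linarith [hub v hvPt]
  have h2 : (inner ℝ w u : ℝ) - (inner ℝ w v : ℝ) ≤ ‖w‖ * dist u v := by
    rw [← inner_sub_right, dist_eq_norm]
    exact real_inner_le_norm w (u - v)
  calc (inner ℝ (a i0) x : ℝ) + b i0 -
      Finset.univ.sup' Finset.univ_nonempty (fun j => (inner ℝ (c j) x : ℝ) + e j)
      ≤ ‖w‖ * dist u v := h1.trans h2
    _ ≤ ρ * dist u v := by
        exact mul_le_mul_of_nonneg_right hwρ dist_nonneg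
    _ ≤ ρ * (hausdorffDist P Pt + ε / ρ) :=
        mul_le_mul_of_nonneg_left hdv.le hρ0
    _ = ρ * hausdorffDist P Pt + ε := by
        field_simp

/-- Hausdorff-distance bound for tropical polynomials: for all `x` in the ball of radius `r`,
`|p x - p̃ x| ≤ ρ · H(P, P̃)` with `ρ = √(r² + 1)`, where `P, P̃ ⊆ ℝ^{d+1}` (with the
Euclidean norm) are the extended Newton polytopes. Equivalently
`(1/ρ) max_{x ∈ B} |p x - p̃ x| ≤ H(P, P̃)`. -/
theorem tropical_approx_le_hausdorffDist {d n m : ℕ} (r : ℝ) (hr : 0 < r)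
    (a : Fin (n + 1) → EuclideanSpace ℝ (Fin d)) (b : Fin (n + 1) → ℝ)
    (c : Fin (m + 1) → EuclideanSpace ℝ (Fin d)) (e : Fin (m + 1) → ℝ)
    (P Pt : Set (WithLp 2 (EuclideanSpace ℝ (Fin d) × ℝ)))
    (hP : P = convexHull ℝ (Set.range fun i => (WithLp.equiv 2 _).symm (a i, b i)))
    (hPt : Pt = convexHull ℝ (Set.range fun j => (WithLp.equiv 2 _).symm (c j, e j))) :
    ∀ x : EuclideanSpace ℝ (Fin d), ‖x‖ ≤ r →
      |Finset.univ.sup' Finset.univ_nonempty (fun i => (inner ℝ (a i) x : ℝ) + b i) -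
          Finset.univ.sup' Finset.univ_nonempty (fun j => (inner ℝ (c j) x : ℝ) + e j)| ≤
        Real.sqrt (r ^ 2 + 1) * Metric.hausdorffDist P Pt := by
  intro x hx
  subst hP hPt
  have hρ : Real.sqrt (‖x‖ ^ 2 + 1) ≤ Real.sqrt (r ^ 2 + 1) := by
    apply Real.sqrt_le_sqrt
    have := norm_nonneg x
    nlinarith
  rw [abs_sub_le_iff]
  constructor
  · exact trop_aux x _ hρ a b c e
  · rw [Metric.hausdorffDist_comm]
    exact trop_aux x _ hρ c e a b
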